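/- Under the Gaussian assumption with symmetric (real) S = VΛVᵀ, for i ≠ j the covariance of graph cross-periodogram entries vanishes: E((v_iᵀ x yᵀ v_i)(v_jᵀ x yᵀ v_j)) = (p_XY)_i (p_XY)_j, where x, y are zero-mean jointly Gaussian real vectors with Σ_XY = V diag(p_XY) Vᵀ, Σ_X = V diag(p_X) Vᵀ, Σ_Y = V diag(p_Y) Vᵀ. -/

import Mathlib

open MeasureTheory ProbabilityTheory Matrix

section Aux
open MeasureTheory ProbabilityTheory Real Set
open scoped NNReal ENNReal

lemma even_integral_Ioi {f : ℝ → ℝ} (hf : Integrable f) (heven : ∀ x, f (-x) = f x) :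
    ∫ x, f x = 2 * ∫ x in Ioi (0:ℝ), f x := by
  rw [← intervalIntegral.integral_Iic_add_Ioi (b := (0:ℝ)) hf.integrableOn hf.integrableOn]
  have : ∫ x in Iic (0:ℝ), f x = ∫ x in Ioi (0:ℝ), f x := by
    rw [← neg_zero, ← integral_comp_neg_Iic]
    simp [heven]
  rw [this]; ring

lemma pow_exp_Ioi {b : ℝ} (hb : 0 < b) (n : ℕ) :
    ∫ x in Ioi (0:ℝ), x ^ n * Real.exp (-b * x^2)
      = b ^ (-((n:ℝ)+1)/2) * (1/2) * Real.Gamma (((n:ℝ)+1)/2) := by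
  rw [← integral_rpow_mul_exp_neg_mul_rpow (p := 2) (q := (n:ℝ)) two_pos
      (by exact_mod_cast neg_one_lt_zero.trans_le (Nat.cast_nonneg n)) hb]
  refine setIntegral_congr_fun measurableSet_Ioi (fun x hx => ?_)
  rw [Real.rpow_natCast, Real.rpow_two]

lemma int_pow_exp_integrable {b : ℝ} (hb : 0 < b) (n : ℕ) :
    Integrable (fun x : ℝ => x ^ n * Real.exp (-b * x^2)) := by
  have h := integrable_rpow_mul_exp_neg_mul_sq hb (s := (n:ℝ))
    (by exact_mod_cast neg_one_lt_zero.trans_le (Nat.cast_nonneg n))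
  simpa [Real.rpow_natCast] using h

lemma int_pow_exp_line {b : ℝ} (hb : 0 < b) (n : ℕ) :
    ∫ x : ℝ, x ^ (2*n) * Real.exp (-b * x^2)
      = b ^ (-(((2*n:ℕ):ℝ)+1)/2) * Real.Gamma ((((2*n:ℕ):ℝ)+1)/2) := by
  rw [even_integral_Ioi (int_pow_exp_integrable hb (2*n))
      (fun x => by rw [Even.neg_pow ⟨n, by ring⟩, neg_pow, show ((-1:ℝ))^2 = 1 by norm_num, one_mul]),
    pow_exp_Ioi hb]
  ring

lemma brpow {b : ℝ} (hb : 0 < b) (m : ℕ) :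
    b ^ (-(((2*m:ℕ):ℝ)+1)/2) = (b^m * Real.sqrt b)⁻¹ := by
  rw [show (-(((2*m:ℕ):ℝ)+1)/2) = -((((2*m:ℕ):ℝ)+1)/2) by ring, Real.rpow_neg hb.le]
  congr 1
  rw [show ((((2*m:ℕ):ℝ))+1)/2 = (m:ℝ) + (1/2 : ℝ) by push_cast; ring,
    Real.rpow_add hb, Real.rpow_natCast, ← Real.sqrt_eq_rpow]

lemma gamma32 : Real.Gamma (3/2) = Real.sqrt π / 2 := by
  rw [show (3/2 : ℝ) = 1/2 + 1 by norm_num, Real.Gamma_add_one (by norm_num),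
    Real.Gamma_one_half_eq]
  ring

lemma gamma52 : Real.Gamma (5/2) = 3 * Real.sqrt π / 4 := by
  rw [show (5/2 : ℝ) = 3/2 + 1 by norm_num, Real.Gamma_add_one (by norm_num), gamma32]
  ring

lemma I2val {b : ℝ} (hb : 0 < b) :
    ∫ x : ℝ, x ^ 2 * Real.exp (-b * x^2) = Real.sqrt π / (2 * b * Real.sqrt b) := by
  rw [show (2:ℕ) = 2*1 by norm_num, int_pow_exp_line hb 1, brpow hb 1,
    show ((((2*1:ℕ):ℝ))+1)/2 = (3/2 : ℝ) by norm_num, gamma32]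
  have h1 : Real.sqrt b ≠ 0 := by positivity

  field_simp

lemma I4val {b : ℝ} (hb : 0 < b) :
    ∫ x : ℝ, x ^ 4 * Real.exp (-b * x^2) = 3 * Real.sqrt π / (4 * b^2 * Real.sqrt b) := by
  rw [show (4:ℕ) = 2*2 by norm_num, int_pow_exp_line hb 2, brpow hb 2,
    show ((((2*2:ℕ):ℝ))+1)/2 = (5/2 : ℝ) by norm_num, gamma52]
  have h1 : Real.sqrt b ≠ 0 := by positivity

  field_simp

lemma I0val {b : ℝ} (hb : 0 < b) :
    ∫ x : ℝ, Real.exp (-b * x^2) = Real.sqrt π / Real.sqrt b := by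
  rw [integral_gaussian]; rw [show π / b = π * b⁻¹ by ring, Real.sqrt_mul Real.pi_pos.le, Real.sqrt_inv]; ring

lemma gaussianReal_integral_eq {v : ℝ≥0} (hv : v ≠ 0) (f : ℝ → ℝ) :
    ∫ x, f x ∂(gaussianReal 0 v) = ∫ x, gaussianPDFReal 0 v x * f x := by
  rw [gaussianReal_of_var_ne_zero 0 hv]
  have h1 : (gaussianPDF 0 v) = fun x => (((gaussianPDFReal 0 v x).toNNReal : ℝ≥0) : ℝ≥0∞) :=
    rfl
  rw [h1, integral_withDensity_eq_integral_smul
    ((measurable_gaussianPDFReal 0 v).real_toNNReal) f]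
  congr 1
  ext x
  rw [NNReal.smul_def, smul_eq_mul, Real.coe_toNNReal _ (gaussianPDFReal_nonneg 0 v x)]

lemma gaussianPDFReal_zero_eq {v : ℝ≥0} (x : ℝ) :
    gaussianPDFReal 0 v x = (Real.sqrt (2*π*v))⁻¹ * Real.exp (-(2*(v:ℝ))⁻¹ * x^2) := by
  rw [gaussianPDFReal]
  congr 1
  rw [sub_zero]
  ring

lemma gaussianReal_integrable_pow (v : ℝ≥0) (n : ℕ) :
    Integrable (fun x => x^n) (gaussianReal 0 v) := by
  by_cases hv : v = 0
  · subst hv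
    rw [gaussianReal_zero_var]
    constructor
    · exact (measurable_id.pow_const n).aestronglyMeasurable
    · rw [HasFiniteIntegral, lintegral_dirac]
      exact ENNReal.coe_lt_top
  · have hvpos : (0:ℝ) < v := by positivity
    have hb : (0:ℝ) < (2*(v:ℝ))⁻¹ := by positivity
    rw [gaussianReal_of_var_ne_zero 0 hv]
    rw [integrable_withDensity_iff (measurable_gaussianPDF 0 v)
      (ae_of_all _ (fun x => ENNReal.ofReal_lt_top))]
    have : (fun x : ℝ => x^n * (gaussianPDF 0 v x).toReal)
        = fun x => (Real.sqrt (2*π*v))⁻¹ * (x^n * Real.exp (-(2*(v:ℝ))⁻¹ * x^2)) := by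
      ext x
      rw [gaussianPDF, ENNReal.toReal_ofReal (gaussianPDFReal_nonneg 0 v x),
        gaussianPDFReal_zero_eq]
      ring
    rw [this]
    exact (int_pow_exp_integrable hb n).const_mul _

lemma gaussianReal_sq_moment (v : ℝ≥0) :
    ∫ x, x^2 ∂(gaussianReal 0 v) = (v:ℝ) := by
  by_cases hv : v = 0
  · subst hv; rw [gaussianReal_zero_var, integral_dirac]; simp
  · have hvpos : (0:ℝ) < v := by positivity
    set b : ℝ := (2*(v:ℝ))⁻¹ with hbdef
    have hb : (0:ℝ) < b := by positivity
    rw [gaussianReal_integral_eq hv]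
    have h2 : (fun x : ℝ => gaussianPDFReal 0 v x * x^2)
        = fun x => (Real.sqrt (2*π*(v:ℝ)))⁻¹ * (x^2 * Real.exp (-b * x^2)) := by
      ext x; rw [gaussianPDFReal_zero_eq]; ring
    rw [h2, integral_const_mul, I2val hb]
    have hs : Real.sqrt (2*π*(v:ℝ)) = Real.sqrt π * Real.sqrt (2*(v:ℝ)) := by
      rw [← Real.sqrt_mul pi_pos.le]
      congr 1; ring
    have hsb : Real.sqrt b = (Real.sqrt (2*(v:ℝ)))⁻¹ := by
      rw [hbdef, Real.sqrt_inv]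
    have h2v : Real.sqrt (2*(v:ℝ)) ^ 2 = 2*(v:ℝ) := Real.sq_sqrt (by positivity)
    have hπ : Real.sqrt π ≠ 0 := by positivity
    have h2vne : Real.sqrt (2*(v:ℝ)) ≠ 0 := by positivity
    rw [hs, hsb, hbdef]
    field_simp

lemma gaussianReal_fourth_moment (v : ℝ≥0) :
    ∫ x, x^4 ∂(gaussianReal 0 v) = 3 * (v:ℝ)^2 := by
  by_cases hv : v = 0
  · subst hv; rw [gaussianReal_zero_var, integral_dirac]; simp
  · have hvpos : (0:ℝ) < v := by positivity
    set b : ℝ := (2*(v:ℝ))⁻¹ with hbdef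
    have hb : (0:ℝ) < b := by positivity
    rw [gaussianReal_integral_eq hv]
    have h2 : (fun x : ℝ => gaussianPDFReal 0 v x * x^4)
        = fun x => (Real.sqrt (2*π*(v:ℝ)))⁻¹ * (x^4 * Real.exp (-b * x^2)) := by
      ext x; rw [gaussianPDFReal_zero_eq]; ring
    rw [h2, integral_const_mul, I4val hb]
    have hs : Real.sqrt (2*π*(v:ℝ)) = Real.sqrt π * Real.sqrt (2*(v:ℝ)) := by
      rw [← Real.sqrt_mul pi_pos.le]
      congr 1; ring
    have hsb : Real.sqrt b = (Real.sqrt (2*(v:ℝ)))⁻¹ := by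
      rw [hbdef, Real.sqrt_inv]
    have h2v : Real.sqrt (2*(v:ℝ)) ^ 2 = 2*(v:ℝ) := Real.sq_sqrt (by positivity)
    have hπ : Real.sqrt π ≠ 0 := by positivity
    have h2vne : Real.sqrt (2*(v:ℝ)) ≠ 0 := by positivity
    rw [hs, hsb, hbdef]
    field_simp
    nlinarith [h2v]

section Prob
variable {Ω : Type*} [MeasureSpace Ω] [IsProbabilityMeasure (volume : Measure Ω)]

def IsG (W : Ω → ℝ) : Prop := ∃ v : ℝ≥0, Measure.map W volume = gaussianReal 0 v

lemma IsG.aemeasurable {W : Ω → ℝ} (h : IsG W) : AEMeasurable W volume := by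
  obtain ⟨v, hv⟩ := h
  by_contra hm
  rw [Measure.map_of_not_aemeasurable hm] at hv
  have h1 := measure_univ (μ := gaussianReal 0 v)
  rw [← hv] at h1
  simp at h1

lemma IsG.integrable_pow {W : Ω → ℝ} (h : IsG W) (n : ℕ) :
    Integrable (fun ω => W ω ^ n) volume := by
  obtain ⟨v, hv⟩ := h
  have hM : AEMeasurable W volume := IsG.aemeasurable ⟨v, hv⟩
  have h1 : Integrable (fun x : ℝ => x^n) (Measure.map W volume) := by
    rw [hv]; exact gaussianReal_integrable_pow v n
  exact (integrable_map_measure ((measurable_id.pow_const n).aestronglyMeasurable) hM).mp h1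

lemma IsG.integral_pow_eq {W : Ω → ℝ} (h : IsG W) (v : ℝ≥0)
    (hv : Measure.map W volume = gaussianReal 0 v) (n : ℕ) :
    ∫ ω, W ω ^ n = ∫ x, x^n ∂(gaussianReal 0 v) := by
  rw [← hv]
  exact (integral_map (IsG.aemeasurable ⟨v, hv⟩)
    ((measurable_id.pow_const n).aestronglyMeasurable)).symm

lemma IsG.moment4 {W : Ω → ℝ} (h : IsG W) :
    ∫ ω, (W ω)^4 = 3 * (∫ ω, (W ω)^2)^2 := by
  obtain ⟨v, hv⟩ := h
  have h2 : ∫ ω, (W ω)^2 = (v:ℝ) := by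
    rw [IsG.integral_pow_eq ⟨v, hv⟩ v hv 2, gaussianReal_sq_moment]
  have h4 : ∫ ω, (W ω)^4 = 3*(v:ℝ)^2 := by
    rw [IsG.integral_pow_eq ⟨v, hv⟩ v hv 4, gaussianReal_fourth_moment]
  rw [h2, h4]

lemma IsG.integrable_mul {W W' : Ω → ℝ} (h : IsG W) (h' : IsG W') :
    Integrable (fun ω => W ω * W' ω) volume := by
  have h2 := h.integrable_pow 2
  have h2' := h'.integrable_pow 2
  refine Integrable.mono' (((h2.add h2')).div_const 2)
    (h.aemeasurable.aestronglyMeasurable.mul h'.aemeasurable.aestronglyMeasurable) ?_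
  filter_upwards with ω
  simp only [Pi.add_apply]
  rw [Real.norm_eq_abs, abs_mul]
  nlinarith [sq_nonneg (|W ω| - |W' ω|), sq_abs (W ω), sq_abs (W' ω), abs_nonneg (W ω),
    abs_nonneg (W' ω)]

end Prob

section Prob2
variable {Ω : Type*} [MeasureSpace Ω] [IsProbabilityMeasure (volume : Measure Ω)]

lemma abstract4 (A B C D : Ω → ℝ) (vA vB vC vD qAB qCD : ℝ)
    (hL : ∀ s1 s2 s3 : ℝ, IsG (fun ω => s1*A ω + s2*B ω + s3*C ω + D ω))
    (covs : ∀ s1 s2 s3 : ℝ, (∫ ω, (s1*A ω + s2*B ω + s3*C ω + D ω)^2)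
      = s1^2*vA + s2^2*vB + s3^2*vC + vD + 2*(s1*s2)*qAB + 2*s3*qCD) :
    ∫ ω, (A ω * B ω) * (C ω * D ω) = qAB * qCD := by
  have m4 : ∀ s1 s2 s3 : ℝ, (∫ ω, (s1*A ω + s2*B ω + s3*C ω + D ω)^4)
      = 3 * (s1^2*vA + s2^2*vB + s3^2*vC + vD + 2*(s1*s2)*qAB + 2*s3*qCD)^2 := by
    intro s1 s2 s3
    rw [(hL s1 s2 s3).moment4, covs]
  have i4 : ∀ s1 s2 s3 : ℝ,
      Integrable (fun ω => (s1*A ω + s2*B ω + s3*C ω + D ω)^4) volume :=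
    fun s1 s2 s3 => (hL s1 s2 s3).integrable_pow 4
  have g1 := i4 1 1 1
  have g2 := i4 1 1 (-1)
  have g3 := i4 1 (-1) 1
  have g4 := i4 1 (-1) (-1)
  have g5 := i4 (-1) 1 1
  have g6 := i4 (-1) 1 (-1)
  have g7 := i4 (-1) (-1) 1
  have g8 := i4 (-1) (-1) (-1)
  have polar : (fun ω => (A ω * B ω) * (C ω * D ω)) = fun ω => (1/192) * (
        (1*A ω + 1*B ω + 1*C ω + D ω)^4
      - (1*A ω + 1*B ω + (-1)*C ω + D ω)^4
      - (1*A ω + (-1)*B ω + 1*C ω + D ω)^4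
      + (1*A ω + (-1)*B ω + (-1)*C ω + D ω)^4
      - ((-1)*A ω + 1*B ω + 1*C ω + D ω)^4
      + ((-1)*A ω + 1*B ω + (-1)*C ω + D ω)^4
      + ((-1)*A ω + (-1)*B ω + 1*C ω + D ω)^4
      - ((-1)*A ω + (-1)*B ω + (-1)*C ω + D ω)^4) := by
    funext ω; ring
  have c1 : Integrable (fun ω : Ω => (1*A ω + 1*B ω + 1*C ω + D ω)^4
      - (1*A ω + 1*B ω + (-1)*C ω + D ω)^4) volume := g1.sub g2
  have c2 : Integrable (fun ω : Ω => ((1*A ω + 1*B ω + 1*C ω + D ω)^4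
      - (1*A ω + 1*B ω + (-1)*C ω + D ω)^4)
      - (1*A ω + (-1)*B ω + 1*C ω + D ω)^4) volume := c1.sub g3
  have c3 : Integrable (fun ω : Ω => (((1*A ω + 1*B ω + 1*C ω + D ω)^4
      - (1*A ω + 1*B ω + (-1)*C ω + D ω)^4)
      - (1*A ω + (-1)*B ω + 1*C ω + D ω)^4)
      + (1*A ω + (-1)*B ω + (-1)*C ω + D ω)^4) volume := c2.add g4
  have c4 : Integrable (fun ω : Ω => ((((1*A ω + 1*B ω + 1*C ω + D ω)^4
      - (1*A ω + 1*B ω + (-1)*C ω + D ω)^4)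
      - (1*A ω + (-1)*B ω + 1*C ω + D ω)^4)
      + (1*A ω + (-1)*B ω + (-1)*C ω + D ω)^4)
      - ((-1)*A ω + 1*B ω + 1*C ω + D ω)^4) volume := c3.sub g5
  have c5 : Integrable (fun ω : Ω => (((((1*A ω + 1*B ω + 1*C ω + D ω)^4
      - (1*A ω + 1*B ω + (-1)*C ω + D ω)^4)
      - (1*A ω + (-1)*B ω + 1*C ω + D ω)^4)
      + (1*A ω + (-1)*B ω + (-1)*C ω + D ω)^4)
      - ((-1)*A ω + 1*B ω + 1*C ω + D ω)^4)
      + ((-1)*A ω + 1*B ω + (-1)*C ω + D ω)^4) volume := c4.add g6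
  have c6 : Integrable (fun ω : Ω => ((((((1*A ω + 1*B ω + 1*C ω + D ω)^4
      - (1*A ω + 1*B ω + (-1)*C ω + D ω)^4)
      - (1*A ω + (-1)*B ω + 1*C ω + D ω)^4)
      + (1*A ω + (-1)*B ω + (-1)*C ω + D ω)^4)
      - ((-1)*A ω + 1*B ω + 1*C ω + D ω)^4)
      + ((-1)*A ω + 1*B ω + (-1)*C ω + D ω)^4)
      + ((-1)*A ω + (-1)*B ω + 1*C ω + D ω)^4) volume := c5.add g7
  rw [show (∫ ω, (A ω * B ω) * (C ω * D ω)) = ∫ ω, (1/192 : ℝ) * (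
        (1*A ω + 1*B ω + 1*C ω + D ω)^4
      - (1*A ω + 1*B ω + (-1)*C ω + D ω)^4
      - (1*A ω + (-1)*B ω + 1*C ω + D ω)^4
      + (1*A ω + (-1)*B ω + (-1)*C ω + D ω)^4
      - ((-1)*A ω + 1*B ω + 1*C ω + D ω)^4
      + ((-1)*A ω + 1*B ω + (-1)*C ω + D ω)^4
      + ((-1)*A ω + (-1)*B ω + 1*C ω + D ω)^4
      - ((-1)*A ω + (-1)*B ω + (-1)*C ω + D ω)^4) from congrArg _ polar]
  rw [integral_const_mul, integral_sub c6 g8, integral_add c5 g7, integral_add c4 g6,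
    integral_sub c3 g5, integral_add c2 g4, integral_sub c1 g3, integral_sub g1 g2,
    m4 1 1 1, m4 1 1 (-1), m4 1 (-1) 1, m4 1 (-1) (-1), m4 (-1) 1 1, m4 (-1) 1 (-1),
    m4 (-1) (-1) 1, m4 (-1) (-1) (-1)]
  ring
end Prob2

def coeffLM {ι : Type*} [Fintype ι] (c : ι → ℝ) : (ι → ℝ) →ₗ[ℝ] ℝ where
  toFun z := ∑ s, c s * z s
  map_add' a b := by simp [mul_add, Finset.sum_add_distrib]
  map_smul' r a := by
    simp only [smul_eq_mul, RingHom.id_apply, Pi.smul_apply, Finset.mul_sum]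
    exact Finset.sum_congr rfl fun s _ => by ring


end Aux

/-- A family of real random variables is jointly Gaussian and centered if every finite
linear combination of its coordinates is a centered Gaussian real random variable. -/
def IsCenteredGaussianFamily {Ω ι : Type*} [MeasureSpace Ω] (Z : Ω → ι → ℝ) : Prop :=
  ∀ l : (ι → ℝ) →ₗ[ℝ] ℝ, ∃ σ2 : NNReal,
    Measure.map (fun ω => l (Z ω)) (volume : Measure Ω) = gaussianReal 0 σ2

/-- Under the Gaussian assumption with real orthogonal `V`, for `i ≠ j` the
covariance of graph cross-periodogram entries vanishes:
`E((v_iᵀ x yᵀ v_i)(v_jᵀ x yᵀ v_j)) = (p_XY)_i (p_XY)_j`. -/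
theorem stmt14 {N : ℕ} {Ω : Type*} [MeasureSpace Ω]
    [IsProbabilityMeasure (volume : Measure Ω)]
    (x y : Ω → Fin N → ℝ)
    (hGauss : IsCenteredGaussianFamily (fun ω => Sum.elim (x ω) (y ω)))
    (V : Matrix (Fin N) (Fin N) ℝ) (hV : Vᵀ * V = 1) (hV' : V * Vᵀ = 1)
    (pX pY pXY : Fin N → ℝ)
    (hX : ∀ i j, (∫ ω, x ω i * x ω j) = (V * Matrix.diagonal pX * Vᵀ) i j)
    (hY : ∀ i j, (∫ ω, y ω i * y ω j) = (V * Matrix.diagonal pY * Vᵀ) i j)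
    (hXY : ∀ i j, (∫ ω, x ω i * y ω j) = (V * Matrix.diagonal pXY * Vᵀ) i j)
    (i j : Fin N) (hij : i ≠ j) :
    ∫ ω, ((∑ k, V k i * x ω k) * (∑ k, y ω k * V k i))
        * ((∑ k, V k j * x ω k) * (∑ k, y ω k * V k j))
      = pXY i * pXY j := by
  classical
  -- every linear combination of the coordinates is Gaussian
  have hGcomb : ∀ α β : Fin N → ℝ,
      IsG (fun ω => (∑ k, α k * x ω k) + (∑ k, β k * y ω k)) := by
    intro α β
    obtain ⟨v, hv⟩ := hGauss (coeffLM (Sum.elim α β))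
    refine ⟨v, ?_⟩
    rw [← hv]
    congr 1
    funext ω
    simp [coeffLM, Fintype.sum_sum_type]
  have hxk : ∀ k, IsG (fun ω => x ω k) := by
    intro k
    have h := hGcomb (fun k' => if k' = k then 1 else 0) 0
    have e : (fun ω => (∑ k', (if k' = k then (1:ℝ) else 0) * x ω k')
        + (∑ k', (0 : Fin N → ℝ) k' * y ω k')) = fun ω => x ω k := by
      funext ω
      simp [ite_mul]
    rwa [e] at h
  have hyk : ∀ k, IsG (fun ω => y ω k) := by
    intro k
    have h := hGcomb 0 (fun k' => if k' = k then 1 else 0)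
    have e : (fun ω => (∑ k', (0 : Fin N → ℝ) k' * x ω k')
        + (∑ k', (if k' = k then (1:ℝ) else 0) * y ω k')) = fun ω => y ω k := by
      funext ω
      simp [ite_mul]
    rwa [e] at h
  have hintxx : ∀ k l, Integrable (fun ω => x ω k * x ω l) volume :=
    fun k l => (hxk k).integrable_mul (hxk l)
  have hintxy : ∀ k l, Integrable (fun ω => x ω k * y ω l) volume :=
    fun k l => (hxk k).integrable_mul (hyk l)
  have hintyy : ∀ k l, Integrable (fun ω => y ω k * y ω l) volume :=
    fun k l => (hyk k).integrable_mul (hyk l)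
  -- key covariance expansion
  have key : ∀ (u w : Ω → Fin N → ℝ) (p : Fin N → ℝ),
      (∀ k l, (∫ ω, u ω k * w ω l) = (V * Matrix.diagonal p * Vᵀ) k l) →
      (∀ k l, Integrable (fun ω => u ω k * w ω l) volume) →
      ∀ (α β : Fin N → ℝ),
      (∫ ω, (∑ k, α k * u ω k) * (∑ l, β l * w ω l))
        = ∑ m, (∑ k, α k * V k m) * (∑ l, β l * V l m) * p m := by
    intro u w p hp hint α β
    have e1 : (fun ω => (∑ k, α k * u ω k) * (∑ l, β l * w ω l))
        = fun ω => ∑ k, ∑ l, (α k * β l) * (u ω k * w ω l) := by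
      funext ω
      rw [Finset.sum_mul_sum]
      exact Finset.sum_congr rfl fun k _ => Finset.sum_congr rfl fun l _ => by ring
    rw [e1, integral_finset_sum _ (fun k _ =>
      integrable_finset_sum _ (fun l _ => (hint k l).const_mul _))]
    have e2 : ∀ k, (∫ ω, ∑ l, (α k * β l) * (u ω k * w ω l))
        = ∑ l, (α k * β l) * ((V * Matrix.diagonal p * Vᵀ) k l) := by
      intro k
      rw [integral_finset_sum _ (fun l _ => (hint k l).const_mul _)]
      refine Finset.sum_congr rfl fun l _ => ?_
      rw [integral_const_mul, hp k l]
    rw [Finset.sum_congr rfl fun k _ => e2 k]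
    have hM : ∀ k l, (V * Matrix.diagonal p * Vᵀ) k l = ∑ m, V k m * p m * V l m := by
      intro k l
      rw [Matrix.mul_apply]
      refine Finset.sum_congr rfl fun m _ => ?_
      rw [Matrix.mul_diagonal, Matrix.transpose_apply]
    calc ∑ k, ∑ l, (α k * β l) * ((V * Matrix.diagonal p * Vᵀ) k l)
        = ∑ k, ∑ l, ∑ m, (α k * β l) * (V k m * p m * V l m) := by
          refine Finset.sum_congr rfl fun k _ => Finset.sum_congr rfl fun l _ => ?_
          rw [hM k l, Finset.mul_sum]
      _ = ∑ k, ∑ m, ∑ l, (α k * β l) * (V k m * p m * V l m) :=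
          Finset.sum_congr rfl fun k _ => Finset.sum_comm
      _ = ∑ m, ∑ k, ∑ l, (α k * β l) * (V k m * p m * V l m) := Finset.sum_comm
      _ = ∑ m, (∑ k, α k * V k m) * (∑ l, β l * V l m) * p m := by
          refine Finset.sum_congr rfl fun m _ => ?_
          rw [Finset.sum_mul_sum, Finset.sum_mul]
          refine Finset.sum_congr rfl fun k _ => ?_
          rw [Finset.sum_mul]
          refine Finset.sum_congr rfl fun l _ => by ring
  -- dot products of combined coefficients with columns of V
  have dotV : ∀ (s t : ℝ) (m : Fin N),
      (∑ k, (s * V k i + t * V k j) * V k m)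
        = s * (if i = m then (1:ℝ) else 0) + t * (if j = m then (1:ℝ) else 0) := by
    intro s t m
    have h1 : (∑ k, V k i * V k m) = (Vᵀ * V) i m := by
      rw [Matrix.mul_apply]
      exact Finset.sum_congr rfl fun k _ => by rw [Matrix.transpose_apply]
    have h2 : (∑ k, V k j * V k m) = (Vᵀ * V) j m := by
      rw [Matrix.mul_apply]
      exact Finset.sum_congr rfl fun k _ => by rw [Matrix.transpose_apply]
    calc (∑ k, (s * V k i + t * V k j) * V k m)
        = s * (∑ k, V k i * V k m) + t * (∑ k, V k j * V k m) := by
          rw [Finset.mul_sum, Finset.mul_sum, ← Finset.sum_add_distrib]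
          exact Finset.sum_congr rfl fun k _ => by ring
      _ = _ := by rw [h1, h2, hV, Matrix.one_apply, Matrix.one_apply]
  -- evaluation of the diagonal sums
  have eval : ∀ (s1 s3 t1 t3 : ℝ) (p : Fin N → ℝ),
      (∑ m, (s1 * (if i = m then (1:ℝ) else 0) + s3 * (if j = m then (1:ℝ) else 0))
          * (t1 * (if i = m then (1:ℝ) else 0) + t3 * (if j = m then (1:ℝ) else 0)) * p m)
        = s1*t1*p i + s3*t3*p j := by
    intro s1 s3 t1 t3 p
    have e : ∀ m : Fin N, (s1 * (if i = m then (1:ℝ) else 0) + s3 * (if j = m then (1:ℝ) else 0))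
          * (t1 * (if i = m then (1:ℝ) else 0) + t3 * (if j = m then (1:ℝ) else 0)) * p m
        = (if i = m then s1*t1*p m else 0) + (if j = m then s3*t3*p m else 0) := by
      intro m
      by_cases h1 : i = m <;> by_cases h2 : j = m
      · exact absurd (h1.trans h2.symm) hij
      · simp [h1, h2]
        try ring
      · simp [h1, h2]
        try ring
      · simp [h1, h2]
    rw [Finset.sum_congr rfl fun m _ => e m, Finset.sum_add_distrib,
      Finset.sum_ite_eq, Finset.sum_ite_eq]
    simp
  -- the combination splitting identity
  have split : ∀ (s1 s2 s3 : ℝ) (ω : Ω),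
      s1*(∑ k, V k i * x ω k) + s2*(∑ k, y ω k * V k i)
        + s3*(∑ k, V k j * x ω k) + (∑ k, y ω k * V k j)
      = (∑ k, (s1 * V k i + s3 * V k j) * x ω k)
        + (∑ k, (s2 * V k i + 1 * V k j) * y ω k) := by
    intro s1 s2 s3 ω
    rw [Finset.mul_sum, Finset.mul_sum, Finset.mul_sum, ← Finset.sum_add_distrib,
      ← Finset.sum_add_distrib, ← Finset.sum_add_distrib, ← Finset.sum_add_distrib]
    exact Finset.sum_congr rfl fun k _ => by ring
  -- Gaussianity of the four-term combinations
  have hL : ∀ s1 s2 s3 : ℝ, IsG (fun ω =>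
      s1*(∑ k, V k i * x ω k) + s2*(∑ k, y ω k * V k i)
        + s3*(∑ k, V k j * x ω k) + (∑ k, y ω k * V k j)) := by
    intro s1 s2 s3
    have h := hGcomb (fun k => s1 * V k i + s3 * V k j) (fun k => s2 * V k i + 1 * V k j)
    have e : (fun ω => (∑ k, (s1 * V k i + s3 * V k j) * x ω k)
        + (∑ k, (s2 * V k i + 1 * V k j) * y ω k))
        = fun ω => s1*(∑ k, V k i * x ω k) + s2*(∑ k, y ω k * V k i)
          + s3*(∑ k, V k j * x ω k) + (∑ k, y ω k * V k j) :=
      funext fun ω => (split s1 s2 s3 ω).symm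
    rwa [e] at h
  -- second moments of the combinations
  have covs : ∀ s1 s2 s3 : ℝ,
      (∫ ω, (s1*(∑ k, V k i * x ω k) + s2*(∑ k, y ω k * V k i)
        + s3*(∑ k, V k j * x ω k) + (∑ k, y ω k * V k j))^2)
      = s1^2*pX i + s2^2*pY i + s3^2*pX j + pY j + 2*(s1*s2)*pXY i + 2*s3*pXY j := by
    intro s1 s2 s3
    have hP : IsG (fun ω => ∑ k, (s1 * V k i + s3 * V k j) * x ω k) := by
      have h := hGcomb (fun k => s1 * V k i + s3 * V k j) 0
      have e : (fun ω => (∑ k, (s1 * V k i + s3 * V k j) * x ω k)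
          + (∑ k, (0 : Fin N → ℝ) k * y ω k)) = fun ω => ∑ k, (s1 * V k i + s3 * V k j) * x ω k := by
        funext ω; simp
      rwa [e] at h
    have hQ : IsG (fun ω => ∑ k, (s2 * V k i + 1 * V k j) * y ω k) := by
      have h := hGcomb 0 (fun k => s2 * V k i + 1 * V k j)
      have e : (fun ω => (∑ k, (0 : Fin N → ℝ) k * x ω k)
          + (∑ k, (s2 * V k i + 1 * V k j) * y ω k))
          = fun ω => ∑ k, (s2 * V k i + 1 * V k j) * y ω k := by
        funext ω; simp
      rwa [e] at h
    have e0 : (fun ω => (s1*(∑ k, V k i * x ω k) + s2*(∑ k, y ω k * V k i)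
        + s3*(∑ k, V k j * x ω k) + (∑ k, y ω k * V k j))^2)
        = fun ω => (∑ k, (s1 * V k i + s3 * V k j) * x ω k)
            * (∑ l, (s1 * V l i + s3 * V l j) * x ω l)
          + (2*((∑ k, (s1 * V k i + s3 * V k j) * x ω k)
            * (∑ l, (s2 * V l i + 1 * V l j) * y ω l))
          + (∑ k, (s2 * V k i + 1 * V k j) * y ω k)
            * (∑ l, (s2 * V l i + 1 * V l j) * y ω l)) := by
      funext ω
      rw [split s1 s2 s3 ω]
      ring
    have h2' : Integrable (fun ω => 2*((∑ k, (s1 * V k i + s3 * V k j) * x ω k)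
        * (∑ l, (s2 * V l i + 1 * V l j) * y ω l))) volume :=
      (hP.integrable_mul hQ).const_mul 2
    have h3' : Integrable (fun ω => (∑ k, (s2 * V k i + 1 * V k j) * y ω k)
        * (∑ l, (s2 * V l i + 1 * V l j) * y ω l)) volume := hQ.integrable_mul hQ
    have h23 : Integrable (fun ω => 2*((∑ k, (s1 * V k i + s3 * V k j) * x ω k)
        * (∑ l, (s2 * V l i + 1 * V l j) * y ω l))
        + (∑ k, (s2 * V k i + 1 * V k j) * y ω k)
        * (∑ l, (s2 * V l i + 1 * V l j) * y ω l)) volume := h2'.add h3'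
    rw [e0, integral_add (hP.integrable_mul hP) h23,
      integral_add h2' h3',
      integral_const_mul,
      key x x pX hX hintxx _ _, key x y pXY hXY hintxy _ _, key y y pY hY hintyy _ _]
    simp only [dotV]
    rw [eval, eval, eval]
    ring
  exact abstract4 _ _ _ _ (pX i) (pY i) (pX j) (pY j) (pXY i) (pXY j) hL covs
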